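/- Let A < B, let Ψ₀ ≡ 1 and let Ψ₁,…,Ψ_{k−1} : [A,B] → ℝ be continuous such that {Ψ₀,…,Ψ_{k−1}} is a Chebyshev system on [A,B]. Let ξ be a finitely supported probability measure on [A,B] whose index satisfies I(ξ) < k/2. Then ξ is the unique finite nonnegative Borel measure η on [A,B] satisfying ∫_A^B Ψ_i dη = ∫_A^B Ψ_i dξ for all i = 0,…,k−1; in particular, any design with the same Ψ-moments as ξ coincides with ξ. -/

import Mathlib

open MeasureTheory Set Matrix Filter Topology
open scoped ENNReal

set_option maxHeartbeats 1000000

/-- A family of functions `Ψ₀, …, Ψ_{k-1}` is a Chebyshev system on `[A,B]` if for all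
points `A ≤ x₀ < x₁ < ⋯ < x_{k-1} ≤ B` the matrix `(Ψ i (x j))` has positive determinant. -/
def IsChebyshevSystem (A B : ℝ) {k : ℕ} (Ψ : Fin k → ℝ → ℝ) : Prop :=
  ∀ x : Fin k → ℝ, StrictMono x → (∀ j, x j ∈ Set.Icc A B) →
    0 < (Matrix.of fun i j : Fin k => Ψ i (x j)).det

/-- `ξ` is a design on `[A,B]`: a finitely supported probability measure
`ξ = ∑_{x ∈ s} w_x δ_x` with support points `s ⊆ [A,B]` and positive weights. -/
def IsDesignOn (A B : ℝ) (ξ : Measure ℝ) (s : Finset ℝ) : Prop :=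
  IsProbabilityMeasure ξ ∧ ↑s ⊆ Set.Icc A B ∧ (∀ x ∈ s, 0 < ξ {x}) ∧
    ξ = ∑ x ∈ s, ξ {x} • Measure.dirac x

/-- The entrywise integral `∫ C₂₂(x) dξ(x)` of a matrix-valued function. -/
noncomputable def matrixIntegral {p₁ : ℕ} (C : ℝ → Matrix (Fin p₁) (Fin p₁) ℝ)
    (ξ : Measure ℝ) : Matrix (Fin p₁) (Fin p₁) ℝ :=
  Matrix.of fun a b => ∫ x, C x a b ∂ξ

open Classical in
/-- The index of a design with support `s` on `[A,B]`: the number of support points in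
the open interval `(A,B)` plus one half times the number of support points among the
endpoints `{A, B}`. -/
noncomputable def designIndex (A B : ℝ) (s : Finset ℝ) : ℝ :=
  ((s.filter fun x => x ∈ Set.Ioo A B).card : ℝ) +
    ((s.filter fun x => x = A ∨ x = B).card : ℝ) / 2

namespace ChebAux

lemma filter_lt_initseg {K : ℕ} {y : Fin K → ℝ} (hy : StrictMono y) {x : ℝ}
    (hne : ∀ t, y t ≠ x) (t : Fin K) :
    y t < x ↔ (t : ℕ) < (Finset.univ.filter fun t => y t < x).card := by
  classical
  set F := Finset.univ.filter fun t : Fin K => y t < x with hF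
  constructor
  · intro h
    have hsub : Finset.range ((t : ℕ) + 1) ⊆ F.image Fin.val := by
      intro i hi
      rw [Finset.mem_range, Nat.lt_succ_iff] at hi
      have hiK : i < K := lt_of_le_of_lt hi t.isLt
      refine Finset.mem_image.2 ⟨⟨i, hiK⟩, ?_, rfl⟩
      simp only [hF, Finset.mem_filter, Finset.mem_univ, true_and]
      exact lt_of_le_of_lt (hy.monotone (by exact hi)) h
    have := Finset.card_le_card hsub
    rwa [Finset.card_range, Finset.card_image_of_injective _ Fin.val_injective,
      Nat.succ_le_iff] at this
  · intro h
    by_contra hlt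
    have hgt : x < y t := lt_of_le_of_ne (not_lt.1 hlt) (Ne.symm (hne t))
    have hsub : F.image Fin.val ⊆ Finset.range (t : ℕ) := by
      intro i hi
      rcases Finset.mem_image.1 hi with ⟨s, hs, rfl⟩
      simp only [hF, Finset.mem_filter, Finset.mem_univ, true_and] at hs
      rw [Finset.mem_range]
      by_contra hst
      exact absurd (lt_trans hs hgt) (not_lt.2 (hy.monotone (not_lt.1 hst)))
    have := Finset.card_le_card hsub
    rw [Finset.card_range, Finset.card_image_of_injective _ Fin.val_injective] at this
    omega

lemma snoc_mk_lt {K : ℕ} (y : Fin K → ℝ) (x : ℝ) {m : ℕ} (h : m < K) (h' : m < K + 1) :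
    (Fin.snoc y x : Fin (K+1) → ℝ) (⟨m, h'⟩ : Fin (K + 1)) = y ⟨m, h⟩ := by
  have : (⟨m, h'⟩ : Fin (K + 1)) = Fin.castSucc ⟨m, h⟩ := by
    apply Fin.ext; simp
  rw [this, Fin.snoc_castSucc]

lemma snoc_mk_last {K : ℕ} (y : Fin K → ℝ) (x : ℝ) (h' : K < K + 1) :
    (Fin.snoc y x : Fin (K+1) → ℝ) (⟨K, h'⟩ : Fin (K + 1)) = x := by
  have : (⟨K, h'⟩ : Fin (K + 1)) = Fin.last K := rfl
  rw [this, Fin.snoc_last]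

lemma snoc_eval_lt {K : ℕ} (y : Fin K → ℝ) (x : ℝ) (j : Fin (K + 1)) (h : (j : ℕ) < K) :
    (Fin.snoc y x : Fin (K+1) → ℝ) j = y ⟨(j : ℕ), h⟩ := by
  have hj : j = Fin.castSucc ⟨(j : ℕ), h⟩ := Fin.ext rfl
  conv_lhs => rw [hj]
  rw [Fin.snoc_castSucc]

/-- The determinant with columns `y₁ < … < y_K, x` equals `(-1)^(K-c)` times a positive
number, where `c` is the number of `y`'s below `x`. -/
lemma det_snoc_pos {A B : ℝ} {K : ℕ} {Ψ : Fin (K + 1) → ℝ → ℝ}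
    (hCheb : IsChebyshevSystem A B Ψ)
    {y : Fin K → ℝ} (hy : StrictMono y) (hyI : ∀ t, y t ∈ Set.Icc A B)
    {x : ℝ} (hxI : x ∈ Set.Icc A B) (hne : ∀ t, y t ≠ x) :
    ∃ D > 0, (Matrix.of fun i j : Fin (K + 1) => Ψ i ((Fin.snoc y x : Fin (K+1) → ℝ) j)).det
      = (-1 : ℝ) ^ (K - (Finset.univ.filter fun t => y t < x).card) * D := by
  classical
  set c := (Finset.univ.filter fun t => y t < x).card with hc
  have hcK : c ≤ K := by
    calc c ≤ Finset.univ.card := Finset.card_le_card (Finset.filter_subset _ _)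
    _ = K := by simp
  have key : ∀ t : Fin K, y t < x ↔ (t : ℕ) < c := filter_lt_initseg hy hne
  set z : Fin (K + 1) → ℝ := fun j =>
    if h : (j : ℕ) < c then y ⟨j, h.trans_le hcK⟩
    else if h' : (j : ℕ) = c then x
    else y ⟨(j : ℕ) - 1, by have := j.isLt; omega⟩ with hz
  have hzmono : StrictMono z := by
    rw [Fin.strictMono_iff_lt_succ]
    intro i
    show z i.castSucc < z i.succ
    rw [hz]
    simp only [Fin.coe_castSucc, Fin.val_succ]
    split_ifs with h1 h2 h3 h4 h5 h6 h7
    · exact hy (by rw [Fin.mk_lt_mk]; omega)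
    · exact (key ⟨(i : ℕ), i.isLt⟩).2 h1
    · omega
    · omega
    · omega
    · -- i = c, goal x < y ⟨i+1-1⟩
      have hkey : y ⟨(i : ℕ), i.isLt⟩ < x ↔ (i : ℕ) < c := key _
      have hnotlt : ¬ y ⟨(i : ℕ), i.isLt⟩ < x := by rw [hkey]; omega
      have hx : x < y ⟨(i : ℕ), i.isLt⟩ :=
        lt_of_le_of_ne (not_lt.1 hnotlt) (Ne.symm (hne _))
      have heq : (⟨(i : ℕ) + 1 - 1, by omega⟩ : Fin K) = ⟨(i : ℕ), i.isLt⟩ := by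
        rw [Fin.mk_eq_mk]; omega
      rw [heq]; exact hx
    · omega
    · omega
    · exact hy (by rw [Fin.mk_lt_mk]; omega)
  have hzI : ∀ j, z j ∈ Set.Icc A B := by
    intro j
    rw [hz]
    dsimp only
    split_ifs
    · exact hyI _
    · exact hxI
    · exact hyI _
  have hD : 0 < (Matrix.of fun i j : Fin (K + 1) => Ψ i (z j)).det := hCheb z hzmono hzI
  refine ⟨_, hD, ?_⟩
  set cF : Fin (K + 1) := ⟨c, by omega⟩ with hcF
  set π : Equiv.Perm (Fin (K + 1)) := Fin.revPerm * (Fin.cycleRange cF.rev) * Fin.revPerm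
    with hπ
  have hπapply : ∀ t, π t = Fin.rev (Fin.cycleRange cF.rev (Fin.rev t)) := fun t => rfl
  have hrev : (cF.rev : ℕ) = K - c := by
    rw [Fin.val_rev]; simp [hcF]
  have hzeval : ∀ (m : ℕ) (hm : m < K + 1), z ⟨m, hm⟩ =
      if h : m < c then y ⟨m, h.trans_le hcK⟩
      else if h' : m = c then x
      else y ⟨m - 1, by omega⟩ := by
    intro m hm; rw [hz]
  have hcomp : ∀ t, (Fin.snoc y x : Fin (K+1) → ℝ) (π t) = z t := by
    intro t
    have htK := t.isLt
    rcases lt_trichotomy ((t : ℕ)) c with h | h | h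
    · have h1 : cF.rev < Fin.rev t := by
        rw [Fin.lt_def, hrev, Fin.val_rev]; omega
      have hπt : π t = t := by
        rw [hπapply, Fin.cycleRange_of_gt h1, Fin.rev_rev]
      rw [hπt, snoc_eval_lt _ _ _ (show (t : ℕ) < K by omega), hz]
      dsimp only
      rw [dif_pos h]
    · have h1 : Fin.rev t = cF.rev := by
        apply Fin.ext; rw [Fin.val_rev, Fin.val_rev]; simp [hcF, h]
      have hπt : π t = ⟨K, by omega⟩ := by
        apply Fin.ext
        show ((cF.rev.cycleRange t.rev).rev : ℕ) = K
        rw [h1, Fin.cycleRange_self, Fin.val_rev]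
        simp
      rw [hπt, snoc_mk_last, hz]
      dsimp only
      rw [dif_neg (by omega), dif_pos h]
    · have h1 : Fin.rev t < cF.rev := by
        rw [Fin.lt_def, hrev, Fin.val_rev]; omega
      have hval : ((Fin.cycleRange cF.rev (Fin.rev t)) : ℕ) = (Fin.rev t : ℕ) + 1 :=
        Fin.coe_cycleRange_of_lt h1
      have hπt : π t = ⟨(t : ℕ) - 1, by omega⟩ := by
        apply Fin.ext
        show ((cF.rev.cycleRange t.rev).rev : ℕ) = (t : ℕ) - 1
        rw [Fin.val_rev, hval, Fin.val_rev]
        omega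
      rw [hπt, snoc_mk_lt _ _ (show (t : ℕ) - 1 < K by omega) _, hz]
      dsimp only
      rw [dif_neg (by omega), dif_neg (by omega)]
  have hmat : (Matrix.of fun i j : Fin (K + 1) => Ψ i ((Fin.snoc y x : Fin (K+1) → ℝ) j))
      = (Matrix.of fun i j : Fin (K + 1) => Ψ i (z j)).submatrix id ⇑π⁻¹ := by
    ext i j
    simp only [Matrix.submatrix_apply, Matrix.of_apply, id]
    rw [← hcomp (π⁻¹ j), (show π (π⁻¹ j) = j from π.apply_symm_apply j)]
  have hsignπ : Equiv.Perm.sign π = (-1 : ℤˣ) ^ (K - c) := by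
    rw [hπ, _root_.map_mul, _root_.map_mul, Fin.sign_cycleRange, hrev,
      mul_comm (Equiv.Perm.sign (Fin.revPerm)) ((-1 : ℤˣ) ^ (K - c)), mul_assoc,
      Int.units_mul_self, mul_one]
  rw [hmat, Matrix.det_permute', Equiv.Perm.sign_inv, hsignπ]
  push_cast
  ring

/-- If `x` coincides with one of the `y`'s, the determinant vanishes. -/
lemma det_snoc_zero {K : ℕ} (Ψ : Fin (K + 1) → ℝ → ℝ)
    (y : Fin K → ℝ) (x : ℝ) (t : Fin K) (ht : y t = x) :
    (Matrix.of fun i j : Fin (K + 1) => Ψ i ((Fin.snoc y x : Fin (K+1) → ℝ) j)).det = 0 := by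
  apply Matrix.det_zero_of_column_eq (i := Fin.castSucc t) (j := Fin.last K)
  · exact (Fin.castSucc_lt_last t).ne
  · intro r
    simp [Fin.snoc_castSucc, Fin.snoc_last, ht]

/-- Laplace expansion along the last column: the determinant is a linear combination of
`Ψ i x` with coefficients independent of `x`. -/
lemma det_snoc_expand {K : ℕ} (Ψ : Fin (K + 1) → ℝ → ℝ) (y : Fin K → ℝ) (x : ℝ) :
    (Matrix.of fun i j : Fin (K + 1) => Ψ i ((Fin.snoc y x : Fin (K+1) → ℝ) j)).det
      = ∑ i : Fin (K + 1), ((-1 : ℝ) ^ ((i : ℕ) + K) *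
          ((Matrix.of fun a (b : Fin K) => Ψ a (y b)).submatrix i.succAbove id).det)
        * Ψ i x := by
  rw [Matrix.det_succ_column _ (Fin.last K)]
  refine Finset.sum_congr rfl fun i _ => ?_
  have h1 : (Matrix.of fun i j : Fin (K + 1) => Ψ i ((Fin.snoc y x : Fin (K+1) → ℝ) j)) i (Fin.last K)
      = Ψ i x := by simp [Fin.snoc_last]
  have h2 : ((Matrix.of fun i j : Fin (K + 1) => Ψ i ((Fin.snoc y x : Fin (K+1) → ℝ) j)).submatrix
        i.succAbove (Fin.last K).succAbove)
      = ((Matrix.of fun a (b : Fin K) => Ψ a (y b)).submatrix i.succAbove id) := by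
    ext a b
    simp [Fin.succAbove_last, Fin.snoc_castSucc]
  rw [h1, h2, Fin.val_last]
  ring

lemma card_le_of_zeros {A B : ℝ} {K : ℕ} {Ψ : Fin (K + 1) → ℝ → ℝ}
    (hCheb : IsChebyshevSystem A B Ψ) {u : Fin (K + 1) → ℝ} (hu : u ≠ 0)
    (T : Finset ℝ) (hTI : ↑T ⊆ Set.Icc A B)
    (hTz : ∀ x ∈ T, ∑ i, u i * Ψ i x = 0) : T.card ≤ K := by
  classical
  by_contra hcard
  push_neg at hcard
  obtain ⟨T', hT'sub, hT'card⟩ := Finset.exists_subset_card_eq (show K + 1 ≤ T.card from hcard)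
  set w : Fin (K + 1) → ℝ := fun t => (T'.orderEmbOfFin hT'card t : ℝ) with hw
  set M : Matrix (Fin (K + 1)) (Fin (K + 1)) ℝ := Matrix.of fun i j => Ψ i (w j) with hM
  have hwmem : ∀ j, w j ∈ T := fun j => hT'sub (Finset.orderEmbOfFin_mem _ _ _)
  have hdet : 0 < M.det :=
    hCheb w (T'.orderEmbOfFin hT'card).strictMono (fun j => hTI (hwmem j))
  have hvm : Matrix.vecMul u M = 0 := by
    funext j
    have : Matrix.vecMul u M j = ∑ i, u i * Ψ i (w j) := by
      simp [hM, Matrix.vecMul, dotProduct]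
    rw [this]
    show _ = (0 : ℝ)
    exact hTz _ (hwmem j)
  have hu0 : u = 0 := by
    have h1 : Matrix.vecMul u (M * M⁻¹) = u := by
      rw [Matrix.mul_nonsing_inv _ (isUnit_iff_ne_zero.2 hdet.ne'), Matrix.vecMul_one]
    rw [← Matrix.vecMul_vecMul, hvm, Matrix.zero_vecMul] at h1
    exact h1.symm
  exact hu hu0

lemma filter_card_eq {K : ℕ} (N : Finset ℝ) (h : N.card = K) (x : ℝ) :
    (Finset.univ.filter fun t : Fin K => (N.orderEmbOfFin h t : ℝ) < x).card
      = (N.filter (· < x)).card := by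
  classical
  apply Finset.card_bij (fun t _ => N.orderEmbOfFin h t)
  · intro t ht
    simp only [Finset.mem_filter, Finset.mem_univ, true_and] at ht ⊢
    exact ⟨Finset.orderEmbOfFin_mem _ _ _, ht⟩
  · intro a _ b _ hab
    exact (N.orderEmbOfFin h).injective hab
  · intro n hn
    simp only [Finset.mem_filter] at hn
    have : n ∈ Set.range (N.orderEmbOfFin h) := by
      rw [Finset.range_orderEmbOfFin]; exact hn.1
    obtain ⟨t, ht⟩ := this
    exact ⟨t, by simp only [Finset.mem_filter, Finset.mem_univ, true_and, ht]; exact hn.2, ht⟩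

/-- The limiting argument: from a sequence of node configurations, produce a nonzero
coefficient vector whose generalized polynomial is nonnegative on `[A,B]` and vanishes
on `s`. -/
lemma exists_nonneg_poly {A B : ℝ} (hAB : A < B) {K : ℕ} {Ψ : Fin (K + 1) → ℝ → ℝ}
    (hCheb : IsChebyshevSystem A B Ψ) (hcont : ∀ i, ContinuousOn (Ψ i) (Set.Icc A B))
    (s : Finset ℝ) (N : ℕ → Finset ℝ) (hcard : ∀ n, (N n).card = K)
    (hIcc : ∀ n, ↑(N n) ⊆ Set.Icc A B)
    (hsN : ∀ x ∈ s, ∀ n, x ∈ N n)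
    (L : Finset ℝ) (b : Bool)
    (hpar : ∀ x ∈ Set.Icc A B, x ∉ L → ∀ᶠ n in Filter.atTop,
      x ∉ N n ∧ (Even (((N n).filter (· < x)).card) ↔ b = true)) :
    ∃ u : Fin (K + 1) → ℝ, u ≠ 0 ∧ (∀ x ∈ Set.Icc A B, 0 ≤ ∑ i, u i * Ψ i x) ∧
      (∀ x ∈ s, ∑ i, u i * Ψ i x = 0) := by
  classical
  set y : ℕ → Fin K → ℝ := fun n t => (N n).orderEmbOfFin (hcard n) t with hy
  have hymono : ∀ n, StrictMono (y n) := fun n => ((N n).orderEmbOfFin (hcard n)).strictMono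
  have hymem : ∀ n t, y n t ∈ N n := fun n t => Finset.orderEmbOfFin_mem _ _ _
  have hyI : ∀ n t, y n t ∈ Set.Icc A B := fun n t => hIcc n (hymem n t)
  set cvec : ℕ → Fin (K + 1) → ℝ := fun n i =>
    (-1 : ℝ) ^ ((i : ℕ) + K) *
      ((Matrix.of fun a (bb : Fin K) => Ψ a (y n bb)).submatrix i.succAbove id).det with hcvec
  have hDeq : ∀ n x, (Matrix.of fun i j : Fin (K + 1) =>
        Ψ i ((Fin.snoc (y n) x : Fin (K+1) → ℝ) j)).det = ∑ i, cvec n i * Ψ i x :=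
    fun n x => det_snoc_expand Ψ (y n) x
  have hyne : ∀ n x, x ∉ N n → ∀ t, y n t ≠ x := by
    intro n x hx t hteq
    exact hx (hteq ▸ hymem n t)
  have hcne : ∀ n, cvec n ≠ 0 := by
    intro n
    have hinf : (Set.Icc A B \ ↑(N n)).Infinite :=
      (Set.Icc_infinite hAB).diff (N n).finite_toSet
    obtain ⟨x, hx⟩ := hinf.nonempty
    obtain ⟨D, hD, hdet⟩ := det_snoc_pos hCheb (hymono n) (hyI n) hx.1 (hyne n x hx.2)
    intro h0
    rw [hDeq n x] at hdet
    have : (0 : ℝ) = (-1) ^ (K - (Finset.univ.filter fun t => y n t < x).card) * D := by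
      rw [← hdet]
      simp [h0]
    have hne0 : ((-1 : ℝ)) ^ (K - (Finset.univ.filter fun t => y n t < x).card) * D ≠ 0 :=
      mul_ne_zero (pow_ne_zero _ (by norm_num)) hD.ne'
    exact hne0 this.symm
  set uvec : ℕ → Fin (K + 1) → ℝ := fun n => (‖cvec n‖)⁻¹ • cvec n with huvec
  have husph : ∀ n, uvec n ∈ Metric.sphere (0 : Fin (K + 1) → ℝ) 1 := by
    intro n
    have hn0 : ‖cvec n‖ ≠ 0 := norm_ne_zero_iff.2 (hcne n)
    simp [huvec, norm_smul, abs_of_nonneg (inv_nonneg.2 (norm_nonneg _)),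
      inv_mul_cancel₀ hn0]
  obtain ⟨u0, hu0mem, φ, hφ, hconv⟩ :=
    (isCompact_sphere (0 : Fin (K + 1) → ℝ) 1).tendsto_subseq husph
  have hu0norm : ‖u0‖ = 1 := by simpa using hu0mem
  have hu0 : u0 ≠ 0 := by
    intro h; rw [h] at hu0norm; simp at hu0norm
  set σ : ℝ := (-1 : ℝ) ^ K * (if b then 1 else -1) with hσ
  have hσ1 : σ = 1 ∨ σ = -1 := by
    rcases Nat.even_or_odd K with hK | hK
    · rw [hσ, hK.neg_one_pow]; cases b <;> simp
    · rw [hσ, hK.neg_one_pow]; cases b <;> simp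
  have hσne : σ ≠ 0 := by rcases hσ1 with h | h <;> rw [h] <;> norm_num
  refine ⟨σ • u0, ?_, ?_, ?_⟩
  · intro h
    apply hu0
    funext i
    have := congrFun h i
    simp only [Pi.smul_apply, smul_eq_mul, Pi.zero_apply] at this
    rcases mul_eq_zero.1 this with h' | h'
    · exact absurd h' hσne
    · simpa using h'
  · -- nonnegativity on Icc
    have hPtend : ∀ x, Filter.Tendsto (fun j => ∑ i, uvec (φ j) i * Ψ i x) Filter.atTop
        (𝓝 (∑ i, u0 i * Ψ i x)) := by
      intro x
      apply tendsto_finset_sum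
      intro i _
      exact (((tendsto_pi_nhds).1 hconv) i).mul_const _
    have hnonneg' : ∀ x ∈ Set.Icc A B, x ∉ L → 0 ≤ σ * ∑ i, u0 i * Ψ i x := by
      intro x hxI hxL
      have hev := (hφ.tendsto_atTop).eventually (hpar x hxI hxL)
      have hφev : ∀ᶠ j in Filter.atTop, 0 ≤ σ * ∑ i, uvec (φ j) i * Ψ i x := by
        filter_upwards [hev] with j hj
        obtain ⟨hx1, hx2⟩ := hj
        set n := φ j
        obtain ⟨D, hD, hdet⟩ := det_snoc_pos hCheb (hymono n) (hyI n) hxI (hyne n x hx1)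
        rw [hDeq n x] at hdet
        set cnt := ((N n).filter (· < x)).card with hcntdef
        have hcnt_eq : (Finset.univ.filter fun t => y n t < x).card = cnt :=
          filter_card_eq (N n) (hcard n) x
        rw [hcnt_eq] at hdet
        have hcntK : cnt ≤ K := by
          rw [hcntdef, ← hcard n]
          exact Finset.card_le_card (Finset.filter_subset _ _)
        have hpar2 : Even (K + (K - cnt)) ↔ Even cnt := by
          rw [Nat.even_add, Nat.even_sub hcntK]; tauto
        have ht : (-1 : ℝ) ^ (K + (K - cnt)) = (if b then (1 : ℝ) else -1) := by
          rcases Nat.even_or_odd cnt with hcnt | hcnt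
          · rw [(hpar2.mpr hcnt).neg_one_pow, if_pos (hx2.mp hcnt)]
          · have hodd : Odd (K + (K - cnt)) :=
              Nat.not_even_iff_odd.1 (fun h => (Nat.not_even_iff_odd.2 hcnt) (hpar2.mp h))
            have hbf : ¬ (b = true) :=
              fun hb => (Nat.not_even_iff_odd.2 hcnt) (hx2.mpr hb)
            rw [hodd.neg_one_pow, if_neg hbf]
        have key : σ * (-1 : ℝ) ^ (K - cnt) = 1 := by
          have : σ * (-1 : ℝ) ^ (K - cnt)
              = (-1 : ℝ) ^ (K + (K - cnt)) * (if b then (1 : ℝ) else -1) := by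
            rw [hσ, pow_add]; ring
          rw [this, ht]; cases b <;> norm_num
        have hsum : ∑ i, uvec n i * Ψ i x = (‖cvec n‖)⁻¹ * ∑ i, cvec n i * Ψ i x := by
          rw [Finset.mul_sum]
          refine Finset.sum_congr rfl fun i _ => ?_
          simp only [huvec, Pi.smul_apply, smul_eq_mul]
          ring
        have hval : σ * ∑ i, uvec n i * Ψ i x = (‖cvec n‖)⁻¹ * D := by
          rw [hsum, hdet]
          calc σ * ((‖cvec n‖)⁻¹ * ((-1 : ℝ) ^ (K - cnt) * D))
              = (‖cvec n‖)⁻¹ * ((σ * (-1 : ℝ) ^ (K - cnt)) * D) := by ring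
          _ = (‖cvec n‖)⁻¹ * D := by rw [key, one_mul]
        rw [hval]
        exact mul_nonneg (inv_nonneg.2 (norm_nonneg _)) hD.le
      have htendσ : Filter.Tendsto (fun j => σ * ∑ i, uvec (φ j) i * Ψ i x)
          Filter.atTop (𝓝 (σ * ∑ i, u0 i * Ψ i x)) := (hPtend x).const_mul σ
      exact ge_of_tendsto htendσ hφev
    set p : ℝ → ℝ := fun x => σ * ∑ i, u0 i * Ψ i x with hp
    have hpcont : ContinuousOn p (Set.Icc A B) := by
      apply ContinuousOn.mul continuousOn_const
      exact continuousOn_finset_sum _ (fun i _ => continuousOn_const.mul (hcont i))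
    have hnonnegIcc : ∀ x ∈ Set.Icc A B, 0 ≤ p x := by
      intro x hx
      by_cases hxL : x ∈ L
      · have hcl : x ∈ closure (Set.Icc A B \ ↑L) := by
          rw [Metric.mem_closure_iff]
          intro ε hε
          have hlu : max A (x - ε/2) < min B (x + ε/2) := by
            rw [max_lt_iff, lt_min_iff, lt_min_iff]
            refine ⟨⟨hAB, ?_⟩, ?_, ?_⟩ <;> [skip; skip; skip] <;>
              · have h1 := hx.1; have h2 := hx.2; linarith
          have hinf2 : (Set.Ioo (max A (x - ε/2)) (min B (x + ε/2)) \ ↑L).Infinite :=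
            (Set.Ioo_infinite hlu).diff L.finite_toSet
          obtain ⟨z, hz⟩ := hinf2.nonempty
          refine ⟨z, ⟨⟨?_, ?_⟩, hz.2⟩, ?_⟩
          · exact le_of_lt (lt_of_le_of_lt (le_max_left _ _) hz.1.1)
          · exact le_of_lt (lt_of_lt_of_le hz.1.2 (min_le_left _ _))
          · have h1 : x - ε/2 ≤ max A (x - ε/2) := le_max_right _ _
            have h2 : min B (x + ε/2) ≤ x + ε/2 := min_le_right _ _
            have h3 := hz.1.1; have h4 := hz.1.2
            rw [Real.dist_eq, abs_lt]
            constructor <;> linarith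
        haveI hnb : (𝓝[Set.Icc A B \ ↑L] x).NeBot :=
          mem_closure_iff_nhdsWithin_neBot.1 hcl
        have htend : Filter.Tendsto p (𝓝[Set.Icc A B \ ↑L] x) (𝓝 (p x)) :=
          (hpcont.continuousWithinAt hx).mono Set.diff_subset
        apply ge_of_tendsto htend
        filter_upwards [self_mem_nhdsWithin] with z hz
        exact hnonneg' z hz.1 (fun hc => hz.2 (Finset.mem_coe.2 hc))
      · exact hnonneg' x hx hxL
    intro x hx
    have : ∑ i, (σ • u0) i * Ψ i x = p x := by
      show _ = σ * ∑ i, u0 i * Ψ i x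
      rw [Finset.mul_sum]
      refine Finset.sum_congr rfl fun i _ => ?_
      simp only [Pi.smul_apply, smul_eq_mul]
      ring
    rw [this]
    exact hnonnegIcc x hx
  · -- vanishing on s
    intro x hxs
    have hzero : ∀ n, ∑ i, uvec n i * Ψ i x = 0 := by
      intro n
      have hxN := hsN x hxs n
      have hxrange : x ∈ Set.range ((N n).orderEmbOfFin (hcard n)) := by
        rw [Finset.range_orderEmbOfFin]; exact hxN
      obtain ⟨t, ht⟩ := hxrange
      have hdet0 := det_snoc_zero Ψ (y n) x t ht
      rw [hDeq n x] at hdet0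
      have hsum : ∑ i, uvec n i * Ψ i x = (‖cvec n‖)⁻¹ * ∑ i, cvec n i * Ψ i x := by
        rw [Finset.mul_sum]
        refine Finset.sum_congr rfl fun i _ => ?_
        simp only [huvec, Pi.smul_apply, smul_eq_mul]
        ring
      rw [hsum, hdet0, mul_zero]
    have hPtendx : Filter.Tendsto (fun j => ∑ i, uvec (φ j) i * Ψ i x) Filter.atTop
        (𝓝 (∑ i, u0 i * Ψ i x)) := by
      apply tendsto_finset_sum
      intro i _
      exact (((tendsto_pi_nhds).1 hconv) i).mul_const _
    have hzero' : (fun j => ∑ i, uvec (φ j) i * Ψ i x) = fun _ => (0 : ℝ) := by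
      funext j; exact hzero (φ j)
    rw [hzero'] at hPtendx
    have hS : ∑ i, u0 i * Ψ i x = 0 := tendsto_nhds_unique hPtendx tendsto_const_nhds
    calc ∑ i, (σ • u0) i * Ψ i x = σ * ∑ i, u0 i * Ψ i x := by
          rw [Finset.mul_sum]
          refine Finset.sum_congr rfl fun i _ => ?_
          simp only [Pi.smul_apply, smul_eq_mul]
          ring
    _ = 0 := by rw [hS, mul_zero]

/-- Construction of node configurations: if `2r + e ≤ K` then there is a nonzero
generalized polynomial, nonnegative on `[A,B]`, vanishing on `s`. -/
lemma exists_nonneg_poly_of_index {A B : ℝ} (hAB : A < B) {K : ℕ}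
    {Ψ : Fin (K + 1) → ℝ → ℝ}
    (hCheb : IsChebyshevSystem A B Ψ) (hcont : ∀ i, ContinuousOn (Ψ i) (Set.Icc A B))
    (s : Finset ℝ) (hsI : ↑s ⊆ Set.Icc A B)
    (hidx : 2 * (s.filter (· ∈ Set.Ioo A B)).card
        + (s.filter (fun x => x = A ∨ x = B)).card ≤ K) :
    ∃ u : Fin (K + 1) → ℝ, u ≠ 0 ∧ (∀ x ∈ Set.Icc A B, 0 ≤ ∑ i, u i * Ψ i x) ∧
      (∀ x ∈ s, ∑ i, u i * Ψ i x = 0) := by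
  classical
  set sInt := s.filter (· ∈ Set.Ioo A B) with hsInt
  set r := sInt.card with hr
  have he : (s.filter (fun x => x = A ∨ x = B)).card
      = (if A ∈ s then 1 else 0) + (if B ∈ s then 1 else 0) := by
    have h1 : s.filter (fun x => x = A ∨ x = B) = s.filter (· = A) ∪ s.filter (· = B) :=
      Finset.filter_or _ _ _
    have h2 : s.filter (· = A) = if A ∈ s then {A} else ∅ := Finset.filter_eq' s A
    have h3 : s.filter (· = B) = if B ∈ s then {B} else ∅ := Finset.filter_eq' s B
    have hdisj : Disjoint (s.filter (· = A)) (s.filter (· = B)) := by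
      rw [Finset.disjoint_left]
      intro x hx hx'
      simp only [Finset.mem_filter] at hx hx'
      exact hAB.ne (hx.2 ▸ hx'.2 ▸ rfl)
    rw [h1, Finset.card_union_of_disjoint hdisj, h2, h3]
    split_ifs <;> simp
  rw [he] at hidx
  set SA : Prop := if Odd K then (A ∈ s ∧ B ∉ s) else (2 * r < K) with hSA
  set SB : Prop := if Odd K then ¬(A ∈ s ∧ B ∉ s) else (2 * r < K) with hSB
  set S : Finset ℝ := (if SA then {A} else ∅) ∪ (if SB then {B} else ∅) with hS
  have hAmemS : A ∈ S ↔ SA := by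
    rw [hS]
    simp only [Finset.mem_union]
    constructor
    · rintro (h | h)
      · by_contra hSA'
        rw [if_neg hSA'] at h; exact absurd h (Finset.notMem_empty A)
      · by_cases hb : SB
        · rw [if_pos hb] at h; simp at h; exact absurd h hAB.ne
        · rw [if_neg hb] at h; exact absurd h (Finset.notMem_empty A)
    · intro h; left; rw [if_pos h]; simp
  have hBmemS : B ∈ S ↔ SB := by
    rw [hS]
    simp only [Finset.mem_union]
    constructor
    · rintro (h | h)
      · by_cases hb : SA
        · rw [if_pos hb] at h; simp at h; exact absurd h.symm hAB.ne
        · rw [if_neg hb] at h; exact absurd h (Finset.notMem_empty B)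
      · by_contra hSB'
        rw [if_neg hSB'] at h; exact absurd h (Finset.notMem_empty B)
    · intro h; right; rw [if_pos h]; simp
  have hSsub' : ∀ x ∈ S, x = A ∨ x = B := by
    intro x hx
    rw [hS, Finset.mem_union] at hx
    rcases hx with h | h <;> split_ifs at h <;> simp at h <;> tauto
  have hSsub : ↑S ⊆ Set.Icc A B := by
    intro x hx
    rcases hSsub' x (Finset.mem_coe.1 hx) with rfl | rfl
    · exact ⟨le_refl _, hAB.le⟩
    · exact ⟨hAB.le, le_refl _⟩
  have hScard : S.card = (if SA then 1 else 0) + (if SB then 1 else 0) := by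
    rw [hS]
    have hdisj : Disjoint (if SA then ({A} : Finset ℝ) else ∅)
        (if SB then ({B} : Finset ℝ) else ∅) := by
      rw [Finset.disjoint_left]
      intro x hx hx'
      split_ifs at hx hx' <;> simp_all
    rw [Finset.card_union_of_disjoint hdisj]
    split_ifs <;> simp
  have hsBSB : B ∈ s → SB := by
    intro hBs
    rw [hSB]
    by_cases hK : Odd K
    · rw [if_pos hK]; tauto
    · rw [if_neg hK]
      rw [if_pos hBs] at hidx
      obtain ⟨m, hm⟩ := Nat.not_odd_iff_even.1 hK
      by_cases hA' : A ∈ s <;> [rw [if_pos hA'] at hidx; rw [if_neg hA'] at hidx] <;> omega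
  have hbudget : S.card + 2 * (r + (if (A ∈ s ∧ ¬ SA) then 1 else 0)) ≤ K ∧
      Even (K - S.card) := by
    rw [hScard]
    by_cases hK : Odd K
    · obtain ⟨m, hm⟩ := hK
      have hK' : Odd K := ⟨m, hm⟩
      by_cases hAs : A ∈ s ∧ B ∉ s
      · have hSAv : SA := by rw [hSA, if_pos hK']; exact hAs
        have hSBv : ¬ SB := by rw [hSB, if_pos hK']; exact not_not_intro hAs
        have hav : ¬ (A ∈ s ∧ ¬ SA) := fun h => h.2 hSAv
        rw [if_pos hSAv, if_neg hSBv, if_neg hav]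
        rw [if_pos hAs.1, if_neg hAs.2] at hidx
        exact ⟨by omega, ⟨m, by omega⟩⟩
      · have hSAv : ¬ SA := by rw [hSA, if_pos hK']; exact hAs
        have hSBv : SB := by rw [hSB, if_pos hK']; exact hAs
        rw [if_neg hSAv, if_pos hSBv]
        by_cases hsA : A ∈ s
        · have hsB : B ∈ s := by
            by_contra hsB'
            exact hAs ⟨hsA, hsB'⟩
          rw [if_pos hsA, if_pos hsB] at hidx
          rw [if_pos ⟨hsA, hSAv⟩]
          exact ⟨by omega, ⟨m, by omega⟩⟩
        · have hav : ¬ (A ∈ s ∧ ¬ SA) := fun h => hsA h.1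
          rw [if_neg hav]
          rw [if_neg hsA] at hidx
          by_cases hsB : B ∈ s <;> [rw [if_pos hsB] at hidx; rw [if_neg hsB] at hidx] <;>
            exact ⟨by omega, ⟨m, by omega⟩⟩
    · obtain ⟨m, hm⟩ := Nat.not_odd_iff_even.1 hK
      by_cases h2r : 2 * r < K
      · have hSAv : SA := by rw [hSA, if_neg hK]; exact h2r
        have hSBv : SB := by rw [hSB, if_neg hK]; exact h2r
        have hav : ¬ (A ∈ s ∧ ¬ SA) := fun h => h.2 hSAv
        rw [if_pos hSAv, if_pos hSBv, if_neg hav]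
        exact ⟨by omega, ⟨m - 1, by omega⟩⟩
      · have hSAv : ¬ SA := by rw [hSA, if_neg hK]; exact h2r
        have hSBv : ¬ SB := by rw [hSB, if_neg hK]; exact h2r
        have hsA : A ∉ s := by
          intro hAs'
          rw [if_pos hAs'] at hidx
          omega
        have hav : ¬ (A ∈ s ∧ ¬ SA) := fun h => hsA h.1
        rw [if_neg hSAv, if_neg hSBv, if_neg hav]
        exact ⟨by omega, ⟨m, by omega⟩⟩
  obtain ⟨hbud1, hbud2⟩ := hbudget
  set an := (if (A ∈ s ∧ ¬ SA) then 1 else 0) with han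
  set f := (K - S.card) / 2 - r - an with hf
  obtain ⟨m2, hm2⟩ := hbud2
  have hkey : S.card + 2 * (r + an + f) = K := by
    have hcard_le : S.card ≤ K := by omega
    omega
  -- the gap point g
  have hBne : (insert B sInt).Nonempty := ⟨B, Finset.mem_insert_self _ _⟩
  set g := (insert B sInt).min' hBne with hg
  have hgB : g ≤ B := Finset.min'_le _ _ (Finset.mem_insert_self _ _)
  have hgs : ∀ t ∈ sInt, g ≤ t := fun t ht => Finset.min'_le _ _ (Finset.mem_insert_of_mem ht)
  have hAg : A < g := by
    have hmem := Finset.min'_mem _ hBne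
    rw [← hg] at hmem
    rcases Finset.mem_insert.1 hmem with h | h
    · rw [h]; exact hAB
    · exact (Finset.mem_filter.1 h).2.1
  set fresh : ℕ → ℝ := fun i => A + (g - A) * ((i : ℝ) + 1) / ((f : ℝ) + 1) with hfresh
  have hgA0 : (0 : ℝ) < g - A := sub_pos.2 hAg
  have hden : (0 : ℝ) < (f : ℝ) + 1 := by positivity
  have hfmono : StrictMono fresh := by
    intro i j hij
    show A + (g - A) * ((i : ℝ) + 1) / ((f : ℝ) + 1)
      < A + (g - A) * ((j : ℝ) + 1) / ((f : ℝ) + 1)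
    have h1 : ((i : ℝ) + 1) < ((j : ℝ) + 1) := by exact_mod_cast Nat.succ_lt_succ hij
    have h2 : (g - A) * ((i : ℝ) + 1) < (g - A) * ((j : ℝ) + 1) :=
      mul_lt_mul_of_pos_left h1 hgA0
    have h3 : (g - A) * ((i : ℝ) + 1) * ((f : ℝ) + 1)⁻¹
        < (g - A) * ((j : ℝ) + 1) * ((f : ℝ) + 1)⁻¹ :=
      mul_lt_mul_of_pos_right h2 (inv_pos.2 hden)
    rw [div_eq_mul_inv, div_eq_mul_inv]
    linarith
  have hfreshIoo : ∀ i < f, fresh i ∈ Set.Ioo A g := by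
    intro i hi
    constructor
    · show A < A + (g - A) * ((i : ℝ) + 1) / ((f : ℝ) + 1)
      have : (0 : ℝ) < (g - A) * ((i : ℝ) + 1) / ((f : ℝ) + 1) := by positivity
      linarith
    · show A + (g - A) * ((i : ℝ) + 1) / ((f : ℝ) + 1) < g
      have h1 : ((i : ℝ) + 1) < ((f : ℝ) + 1) := by exact_mod_cast Nat.succ_lt_succ hi
      have h2 : (g - A) * ((i : ℝ) + 1) / ((f : ℝ) + 1) < g - A := by
        rw [div_lt_iff₀ hden]
        nlinarith
      linarith
  set Fresh := (Finset.range f).image fresh with hFresh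
  have hFreshcard : Fresh.card = f := by
    rw [hFresh, Finset.card_image_of_injective _ hfmono.injective, Finset.card_range]
  have hFreshmem : ∀ x ∈ Fresh, x ∈ Set.Ioo A g := by
    intro x hx
    rw [hFresh] at hx
    obtain ⟨i, hi, rfl⟩ := Finset.mem_image.1 hx
    exact hfreshIoo i (Finset.mem_range.1 hi)
  set APt : Finset ℝ := if (A ∈ s ∧ ¬ SA) then {A} else ∅ with hAPt
  have hAPtcard : APt.card = an := by
    rw [hAPt, han]; split_ifs <;> simp
  have hAPtmem : ∀ x ∈ APt, x = A := by
    intro x hx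
    rw [hAPt] at hx
    split_ifs at hx
    · exact Finset.mem_singleton.1 hx
    · exact absurd hx (Finset.notMem_empty x)
  set P := sInt ∪ APt ∪ Fresh with hP
  have hPIco : ∀ p ∈ P, p ∈ Set.Ico A B := by
    intro p hp
    rw [hP] at hp
    rcases Finset.mem_union.1 hp with h | h
    · rcases Finset.mem_union.1 h with h | h
      · have := (Finset.mem_filter.1 h).2
        exact ⟨this.1.le, this.2⟩
      · rw [hAPtmem p h]; exact ⟨le_refl _, hAB⟩
    · have := hFreshmem p h
      exact ⟨this.1.le, lt_of_lt_of_le this.2 hgB⟩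
  have hPcard : P.card = r + an + f := by
    have hd1 : Disjoint sInt APt := by
      rw [Finset.disjoint_left]
      intro x hx hx'
      rw [hAPtmem x hx'] at hx
      exact lt_irrefl A (Finset.mem_filter.1 hx).2.1
    have hd2 : Disjoint (sInt ∪ APt) Fresh := by
      rw [Finset.disjoint_left]
      intro x hx hx'
      have hxg := hFreshmem x hx'
      rcases Finset.mem_union.1 hx with h | h
      · exact absurd hxg.2 (not_lt.2 (hgs x h))
      · rw [hAPtmem x h] at hxg
        exact lt_irrefl A hxg.1
    rw [hP, Finset.card_union_of_disjoint hd2, Finset.card_union_of_disjoint hd1,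
      hAPtcard, hFreshcard, ← hr]
  have hAP : SA → A ∉ P := by
    intro hSAv hAP'
    rw [hP] at hAP'
    rcases Finset.mem_union.1 hAP' with h | h
    · rcases Finset.mem_union.1 h with h | h
      · exact lt_irrefl A (Finset.mem_filter.1 h).2.1
      · rw [hAPt] at h
        split_ifs at h with hav
        · exact hav.2 hSAv
        · exact absurd h (Finset.notMem_empty A)
    · exact lt_irrefl A (hFreshmem A h).1
  -- the global small constant
  set TF : Finset ℝ := (P.image (fun p => B - p)) ∪
      (((P ×ˢ P).filter (fun z => z.1 < z.2)).image (fun z => z.2 - z.1)) ∪ {B - A} with hTF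
  have hTFne : TF.Nonempty := ⟨B - A, by rw [hTF]; simp⟩
  have hTFpos : ∀ t ∈ TF, 0 < t := by
    intro t ht
    rw [hTF] at ht
    rcases Finset.mem_union.1 ht with ht' | ht'
    · rcases Finset.mem_union.1 ht' with ht'' | ht''
      · obtain ⟨p, hp, rfl⟩ := Finset.mem_image.1 ht''
        exact sub_pos.2 (hPIco p hp).2
      · obtain ⟨z, hz, rfl⟩ := Finset.mem_image.1 ht''
        exact sub_pos.2 (Finset.mem_filter.1 hz).2
    · rw [Finset.mem_singleton.1 ht']
      exact sub_pos.2 hAB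
  set θ := TF.min' hTFne with hθ
  have hθpos : 0 < θ := hTFpos _ (Finset.min'_mem _ _)
  have hθle : ∀ t ∈ TF, θ ≤ t := fun t => Finset.min'_le _ _
  set ε : ℕ → ℝ := fun n => θ / ((n : ℝ) + 2) with hε
  have hεpos : ∀ n, 0 < ε n := fun n => div_pos hθpos (by positivity)
  have hεθ : ∀ n, ε n < θ := by
    intro n
    show θ / ((n : ℝ) + 2) < θ
    rw [div_lt_iff₀ (by positivity)]
    have h0 : (0 : ℝ) ≤ (n : ℝ) := Nat.cast_nonneg n
    nlinarith
  have hεB : ∀ n, ∀ p ∈ P, p + ε n < B := by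
    intro n p hp
    have h1 : θ ≤ B - p := by
      apply hθle
      rw [hTF]
      exact Finset.mem_union_left _ (Finset.mem_union_left _ (Finset.mem_image_of_mem _ hp))
    linarith [hεθ n]
  have hεgap : ∀ n, ∀ p ∈ P, ∀ q ∈ P, p < q → p + ε n < q := by
    intro n p hp q hq hpq
    have h1 : θ ≤ q - p := by
      apply hθle
      rw [hTF]
      apply Finset.mem_union_left
      apply Finset.mem_union_right
      have hmem : (p, q) ∈ (P ×ˢ P).filter (fun z => z.1 < z.2) :=
        Finset.mem_filter.2 ⟨Finset.mem_product.2 ⟨hp, hq⟩, hpq⟩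
      exact Finset.mem_image_of_mem (fun z => z.2 - z.1) hmem
    linarith [hεθ n]
  have hεtend : Filter.Tendsto ε Filter.atTop (𝓝 0) := by
    rw [hε]
    apply Filter.Tendsto.div_atTop (tendsto_const_nhds)
    apply Filter.tendsto_atTop_add_const_right
    exact tendsto_natCast_atTop_atTop
  set Nn : ℕ → Finset ℝ := fun n => S ∪ P ∪ P.image (· + ε n) with hNn
  have hPimage : ∀ n, ∀ x ∈ P.image (· + ε n), A < x ∧ x < B ∧ x ∉ P := by
    intro n x hx
    obtain ⟨p, hp, rfl⟩ := Finset.mem_image.1 hx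
    have h1 := (hPIco p hp).1
    refine ⟨by linarith [hεpos n], hεB n p hp, ?_⟩
    intro hmem
    exact absurd (hεgap n p hp _ hmem (by linarith [hεpos n])) (lt_irrefl _)
  have hNcard : ∀ n, (Nn n).card = K := by
    intro n
    have hd1 : Disjoint (S ∪ P) (P.image (· + ε n)) := by
      rw [Finset.disjoint_right]
      intro x hx hx'
      obtain ⟨hA', hB', hP'⟩ := hPimage n x hx
      rcases Finset.mem_union.1 hx' with h | h
      · rcases hSsub' x h with rfl | rfl
        · exact lt_irrefl _ hA'
        · exact lt_irrefl _ hB'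
      · exact hP' h
    have hd2 : Disjoint S P := by
      rw [Finset.disjoint_left]
      intro x hxS hxP
      rcases hSsub' x hxS with rfl | rfl
      · exact hAP (hAmemS.1 hxS) hxP
      · exact lt_irrefl _ (hPIco _ hxP).2
    rw [hNn]
    show (S ∪ P ∪ P.image (· + ε n)).card = K
    rw [Finset.card_union_of_disjoint hd1, Finset.card_union_of_disjoint hd2,
      Finset.card_image_of_injective _ (add_left_injective _), hPcard]
    omega
  have hNIcc : ∀ n, ↑(Nn n) ⊆ Set.Icc A B := by
    intro n x hx
    rw [Finset.mem_coe] at hx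
    have hx' : x ∈ S ∪ P ∪ P.image (· + ε n) := hx
    rcases Finset.mem_union.1 hx' with h | h
    · rcases Finset.mem_union.1 h with h | h
      · exact hSsub (Finset.mem_coe.2 h)
      · have := hPIco x h; exact ⟨this.1, this.2.le⟩
    · obtain ⟨hA', hB', _⟩ := hPimage n x h
      exact ⟨hA'.le, hB'.le⟩
  have hsN : ∀ x ∈ s, ∀ n, x ∈ Nn n := by
    intro x hxs n
    show x ∈ S ∪ P ∪ P.image (· + ε n)
    by_cases hx : x ∈ Set.Ioo A B
    · apply Finset.mem_union_left; apply Finset.mem_union_right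
      rw [hP]; apply Finset.mem_union_left; apply Finset.mem_union_left
      exact Finset.mem_filter.2 ⟨hxs, hx⟩
    · have hxI := hsI (Finset.mem_coe.2 hxs)
      have hxAB : x = A ∨ x = B := by
        rcases hxI with ⟨h1, h2⟩
        rcases eq_or_lt_of_le h1 with h | h
        · left; exact h.symm
        · rcases eq_or_lt_of_le h2 with h' | h'
          · right; exact h'
          · exact absurd ⟨h, h'⟩ hx
      rcases hxAB with rfl | rfl
      · by_cases hSAv : SA
        · apply Finset.mem_union_left; apply Finset.mem_union_left
          exact hAmemS.2 hSAv
        · apply Finset.mem_union_left; apply Finset.mem_union_right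
          rw [hP]; apply Finset.mem_union_left; apply Finset.mem_union_right
          rw [hAPt, if_pos ⟨hxs, hSAv⟩]
          simp
      · apply Finset.mem_union_left; apply Finset.mem_union_left
        exact hBmemS.2 (hsBSB hxs)
  set LL : Finset ℝ := S ∪ P ∪ {A, B} with hLL
  set bb : Bool := if SA then false else true with hbb
  have hpar : ∀ x ∈ Set.Icc A B, x ∉ LL → ∀ᶠ n in Filter.atTop,
      x ∉ Nn n ∧ (Even (((Nn n).filter (· < x)).card) ↔ bb = true) := by
    intro x hxI hxL
    have hxA : x ≠ A := by
      intro h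
      exact hxL (by rw [hLL]; apply Finset.mem_union_right; simp [h])
    have hxB : x ≠ B := by
      intro h
      exact hxL (by rw [hLL]; apply Finset.mem_union_right; simp [h])
    have hxS : x ∉ S := fun h =>
      hxL (by rw [hLL]; exact Finset.mem_union_left _ (Finset.mem_union_left _ h))
    have hxP : x ∉ P := fun h =>
      hxL (by rw [hLL]; exact Finset.mem_union_left _ (Finset.mem_union_right _ h))
    have hAx : A < x := lt_of_le_of_ne hxI.1 (Ne.symm hxA)
    have hxB' : x < B := lt_of_le_of_ne hxI.2 hxB
    set Px := P.filter (· < x) with hPx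
    set Q := Px.image (fun p => x - p) ∪ {x - A} with hQ
    have hQne : Q.Nonempty := ⟨x - A, by rw [hQ]; simp⟩
    set δ := Q.min' hQne with hδ
    have hδpos : 0 < δ := by
      have hmem := Finset.min'_mem Q hQne
      rw [← hδ, hQ] at hmem
      rcases Finset.mem_union.1 hmem with h | h
      · obtain ⟨p, hp, heq⟩ := Finset.mem_image.1 h
        rw [← heq]
        exact sub_pos.2 (Finset.mem_filter.1 hp).2
      · rw [Finset.mem_singleton.1 h]
        exact sub_pos.2 hAx
    have hδle : ∀ p ∈ P, p < x → δ ≤ x - p := by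
      intro p hp hpx
      apply Finset.min'_le
      rw [hQ]
      exact Finset.mem_union_left _
        (Finset.mem_image_of_mem _ (Finset.mem_filter.2 ⟨hp, hpx⟩))
    have hev : ∀ᶠ n in Filter.atTop, ε n < δ :=
      hεtend.eventually_lt_const hδpos
    filter_upwards [hev] with n hn
    have hxNim : x ∉ P.image (· + ε n) := by
      intro hmem
      obtain ⟨p, hp, heq⟩ := Finset.mem_image.1 hmem
      have hpx : p < x := by
        have := hεpos n
        linarith [heq.le]
      have h1 := hδle p hp hpx
      have h2 : δ ≤ ε n := by linarith [heq.ge]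
      linarith
    have hxN : x ∉ Nn n := by
      intro hmem
      have hmem' : x ∈ S ∪ P ∪ P.image (· + ε n) := hmem
      rcases Finset.mem_union.1 hmem' with h | h
      · rcases Finset.mem_union.1 h with h | h
        exacts [hxS h, hxP h]
      · exact hxNim h
    refine ⟨hxN, ?_⟩
    have himgfilter : (P.image (· + ε n)).filter (· < x) = Px.image (· + ε n) := by
      ext t
      constructor
      · intro ht
        obtain ⟨ht1, ht2⟩ := Finset.mem_filter.1 ht
        obtain ⟨p, hp, heq⟩ := Finset.mem_image.1 ht1
        apply Finset.mem_image.2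
        refine ⟨p, Finset.mem_filter.2 ⟨hp, ?_⟩, heq⟩
        have := hεpos n
        linarith [heq.le]
      · intro ht
        obtain ⟨p, hp, heq⟩ := Finset.mem_image.1 ht
        obtain ⟨hp1, hp2⟩ := Finset.mem_filter.1 hp
        refine Finset.mem_filter.2 ⟨Finset.mem_image.2 ⟨p, hp1, heq⟩, ?_⟩
        have := hδle p hp1 hp2
        linarith [heq.ge]
    have hSfilter : S.filter (· < x) = if SA then ({A} : Finset ℝ) else ∅ := by
      ext t
      simp only [Finset.mem_filter]
      constructor
      · rintro ⟨ht, hlt⟩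
        rcases hSsub' t ht with rfl | rfl
        · rw [if_pos (hAmemS.1 ht)]; simp
        · linarith
      · intro ht
        split_ifs at ht with hSAv
        · rw [Finset.mem_singleton.1 ht]
          exact ⟨hAmemS.2 hSAv, hAx⟩
        · exact absurd ht (Finset.notMem_empty t)
    have hd2 : Disjoint S P := by
      rw [Finset.disjoint_left]
      intro z hzS hzP
      rcases hSsub' z hzS with rfl | rfl
      · exact hAP (hAmemS.1 hzS) hzP
      · exact lt_irrefl _ (hPIco _ hzP).2
    have hd1 : Disjoint (S ∪ P) (P.image (· + ε n)) := by
      rw [Finset.disjoint_right]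
      intro z hz hz'
      obtain ⟨hA', hB', hP'⟩ := hPimage n z hz
      rcases Finset.mem_union.1 hz' with h | h
      · rcases hSsub' z h with rfl | rfl
        · exact lt_irrefl _ hA'
        · exact lt_irrefl _ hB'
      · exact hP' h
    have hcnt : ((Nn n).filter (· < x)).card
        = (if SA then 1 else 0) + (Px.card + Px.card) := by
      have hstep : (Nn n).filter (· < x)
          = (S.filter (· < x) ∪ P.filter (· < x)) ∪ (P.image (· + ε n)).filter (· < x) := by
        show (S ∪ P ∪ P.image (· + ε n)).filter (· < x) = _
        rw [Finset.filter_union, Finset.filter_union]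
      have hsubS : (if SA then ({A} : Finset ℝ) else ∅) ⊆ S := by
        split_ifs with h
        · exact Finset.singleton_subset_iff.2 (hAmemS.2 h)
        · exact Finset.empty_subset _
      have hdA : Disjoint (if SA then ({A} : Finset ℝ) else ∅) (P.filter (· < x)) :=
        Finset.disjoint_of_subset_left hsubS
          (Finset.disjoint_of_subset_right (Finset.filter_subset _ _) hd2)
      have hdB : Disjoint ((if SA then ({A} : Finset ℝ) else ∅) ∪ P.filter (· < x))
          (Px.image (· + ε n)) := by
        apply Finset.disjoint_of_subset_left
          (Finset.union_subset_union hsubS (Finset.filter_subset _ _))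
        apply Finset.disjoint_of_subset_right
          (Finset.image_subset_image (Finset.filter_subset _ _))
        exact hd1
      rw [hstep, himgfilter, hSfilter, Finset.card_union_of_disjoint hdB,
        Finset.card_union_of_disjoint hdA,
        Finset.card_image_of_injective _ (add_left_injective _)]
      have hite : (if SA then ({A} : Finset ℝ) else ∅).card = if SA then 1 else 0 := by
        split_ifs <;> simp
      rw [hite, ← hPx]
      ring
    rw [hcnt, hbb]
    by_cases hSAv : SA
    · rw [if_pos hSAv, if_pos hSAv]
      constructor
      · rintro ⟨t, ht⟩
        omega
      · intro h
        exact absurd h (by simp)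
    · rw [if_neg hSAv, if_neg hSAv]
      constructor
      · intro _; rfl
      · intro _
        exact ⟨Px.card, by omega⟩
  obtain ⟨u, hu0, hu1, hu2⟩ := exists_nonneg_poly hAB hCheb hcont s Nn hNcard hNIcc hsN LL bb hpar
  exact ⟨u, hu0, hu1, hu2⟩

lemma measure_eq_sum_dirac {η : Measure ℝ} {Z : Finset ℝ}
    (hZ : η ((↑Z : Set ℝ)ᶜ) = 0) : η = ∑ x ∈ Z, η {x} • Measure.dirac x := by
  classical
  ext E hE
  have hZm : MeasurableSet (↑Z : Set ℝ) := Z.finite_toSet.measurableSet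
  have h1 : η E = η (E ∩ ↑Z) := by
    have h2 := measure_inter_add_diff (μ := η) E hZm
    have h3 : η (E \ ↑Z) = 0 :=
      measure_mono_null (fun z hz => hz.2) hZ
    rw [← h2, h3, add_zero]
  have h2 : E ∩ ↑Z = ↑(Z.filter (· ∈ E)) := by
    ext z
    simp only [Set.mem_inter_iff, Finset.coe_filter, Set.mem_setOf_eq, Finset.mem_coe]
    tauto
  have h3 : η (↑(Z.filter (· ∈ E))) = ∑ x ∈ Z.filter (· ∈ E), η {x} := by
    have hu : (↑(Z.filter (· ∈ E)) : Set ℝ) = ⋃ x ∈ Z.filter (· ∈ E), {x} := by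
      ext z
      simp
    rw [hu]
    exact measure_biUnion_finset
      (fun a _ b _ hab => by simp [Set.disjoint_singleton, hab])
      (fun b _ => measurableSet_singleton b)
  have h4 : (∑ x ∈ Z, η {x} • Measure.dirac x) E = ∑ x ∈ Z, if x ∈ E then η {x} else 0 := by
    rw [Measure.finset_sum_apply]
    refine Finset.sum_congr rfl fun x hx => ?_
    rw [Measure.smul_apply, Measure.dirac_apply' _ hE, smul_eq_mul, Set.indicator_apply]
    split_ifs <;> simp
  rw [h1, h2, h3, h4, Finset.sum_filter]

lemma integrable_dirac' {x : ℝ} (φ : ℝ → ℝ) : Integrable φ (Measure.dirac x) := by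
  have hae : φ =ᵐ[Measure.dirac x] (fun _ => φ x) := by
    rw [MeasureTheory.ae_dirac_eq]
    exact Filter.eventually_pure.2 rfl
  exact (integrable_const (φ x)).congr hae.symm

lemma integral_sum_dirac {Z : Finset ℝ} (w : ℝ → ℝ≥0∞) (hw : ∀ x ∈ Z, w x ≠ ⊤)
    (φ : ℝ → ℝ) :
    ∫ x, φ x ∂(∑ x ∈ Z, w x • Measure.dirac x) = ∑ x ∈ Z, (w x).toReal * φ x := by
  rw [MeasureTheory.integral_finset_sum_measure
    (fun x hx => (integrable_dirac' φ).smul_measure (hw x hx))]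
  refine Finset.sum_congr rfl fun x hx => ?_
  rw [MeasureTheory.integral_smul_measure, MeasureTheory.integral_dirac, smul_eq_mul]

lemma integrable_of_continuousOn_of_support {A B : ℝ} {μ : Measure ℝ} [IsFiniteMeasure μ]
    (hμ : μ ((Set.Icc A B)ᶜ) = 0) {φ : ℝ → ℝ} (hφ : ContinuousOn φ (Set.Icc A B)) :
    Integrable φ μ := by
  have hae : ∀ᵐ z ∂μ, z ∈ Set.Icc A B := ae_iff.2 hμ
  have hres : μ.restrict (Set.Icc A B) = μ := Measure.restrict_eq_self_of_ae_mem hae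
  obtain ⟨C, hC⟩ := (isCompact_Icc (a := A) (b := B)).exists_bound_of_continuousOn hφ
  have hasm : AEStronglyMeasurable φ μ := by
    rw [← hres]
    exact hφ.aestronglyMeasurable measurableSet_Icc
  apply Integrable.mono' (integrable_const C) hasm
  filter_upwards [hae] with z hz
  exact hC z hz

end ChebAux

/-- If `{Ψ₀,…,Ψ_{k-1}}` (with `Ψ₀ ≡ 1`) is a Chebyshev system on `[A,B]` and `ξ` is a
design whose index satisfies `I(ξ) < k/2`, then `ξ` is the unique finite nonnegative
Borel measure on `[A,B]` with its `Ψ`-moments. -/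
theorem design_with_small_index_unique
    {k : ℕ} (hk : 0 < k) (A B : ℝ) (hAB : A < B)
    (Ψ : Fin k → ℝ → ℝ)
    (hΨ0 : ∀ x : ℝ, Ψ ⟨0, hk⟩ x = 1)
    (hcontΨ : ∀ i, ContinuousOn (Ψ i) (Set.Icc A B))
    (hCheb : IsChebyshevSystem A B Ψ)
    (ξ : Measure ℝ) (s : Finset ℝ) (hξ : IsDesignOn A B ξ s)
    (hidx : designIndex A B s < (k : ℝ) / 2) :
    ∀ η : Measure ℝ, IsFiniteMeasure η → η (Set.Icc A B)ᶜ = 0 →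
      (∀ i, ∫ x, Ψ i x ∂η = ∫ x, Ψ i x ∂ξ) → η = ξ := by
  classical
  obtain ⟨K, rfl⟩ : ∃ K, k = K + 1 := ⟨k - 1, by omega⟩
  intro η hηfin hηc hmom
  obtain ⟨hprob, hsIcc, hwpos, hrepr⟩ := hξ
  haveI := hprob
  have hidx' : 2 * (s.filter (· ∈ Set.Ioo A B)).card
      + (s.filter (fun x => x = A ∨ x = B)).card ≤ K := by
    unfold designIndex at hidx
    set c1 := (s.filter (· ∈ Set.Ioo A B)).card with hc1
    set c2 := (s.filter (fun x => x = A ∨ x = B)).card with hc2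
    have h2 : 2 * (c1 : ℝ) + (c2 : ℝ) < (K : ℝ) + 1 := by
      push_cast at hidx
      linarith
    have h3 : 2 * c1 + c2 < K + 1 := by exact_mod_cast h2
    omega
  obtain ⟨u, hu0, hunn, huz⟩ :=
    ChebAux.exists_nonneg_poly_of_index hAB hCheb hcontΨ s hsIcc hidx'
  set p : ℝ → ℝ := fun x => ∑ i, u i * Ψ i x with hp
  have hpcont : ContinuousOn p (Set.Icc A B) :=
    continuousOn_finset_sum _ (fun i _ => continuousOn_const.mul (hcontΨ i))
  have hξc : ξ ((Set.Icc A B)ᶜ) = 0 := by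
    rw [hrepr, Measure.finset_sum_apply]
    apply Finset.sum_eq_zero
    intro x hx
    rw [Measure.smul_apply, Measure.dirac_apply' _ measurableSet_Icc.compl, smul_eq_mul,
      Set.indicator_of_notMem (not_not_intro (hsIcc hx)), mul_zero]
  have hintη : ∀ {φ : ℝ → ℝ}, ContinuousOn φ (Set.Icc A B) → Integrable φ η :=
    fun hφ => ChebAux.integrable_of_continuousOn_of_support hηc hφ
  have hintξ : ∀ {φ : ℝ → ℝ}, ContinuousOn φ (Set.Icc A B) → Integrable φ ξ :=
    fun hφ => ChebAux.integrable_of_continuousOn_of_support hξc hφ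
  have hintp : ∫ x, p x ∂η = ∫ x, p x ∂ξ := by
    have hη : ∫ x, p x ∂η = ∑ i, u i * ∫ x, Ψ i x ∂η := by
      show ∫ x, (∑ i, u i * Ψ i x) ∂η = _
      rw [integral_finset_sum _ (fun i _ => (hintη (hcontΨ i)).const_mul (u i))]
      exact Finset.sum_congr rfl fun i _ => integral_const_mul _ _
    have hξ' : ∫ x, p x ∂ξ = ∑ i, u i * ∫ x, Ψ i x ∂ξ := by
      show ∫ x, (∑ i, u i * Ψ i x) ∂ξ = _
      rw [integral_finset_sum _ (fun i _ => (hintξ (hcontΨ i)).const_mul (u i))]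
      exact Finset.sum_congr rfl fun i _ => integral_const_mul _ _
    rw [hη, hξ']
    exact Finset.sum_congr rfl fun i _ => by rw [hmom i]
  have hpξ : ∫ x, p x ∂ξ = 0 := by
    conv_lhs => rw [hrepr]
    rw [ChebAux.integral_sum_dirac (fun x => ξ {x}) (fun x _ => measure_ne_top ξ _) p]
    apply Finset.sum_eq_zero
    intro x hx
    have : p x = 0 := huz x hx
    rw [this, mul_zero]
  have hp0 : ∫ x, p x ∂η = 0 := by rw [hintp, hpξ]
  have haeIcc : ∀ᵐ z ∂η, z ∈ Set.Icc A B := ae_iff.2 hηc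
  have hnn : 0 ≤ᵐ[η] p := by
    filter_upwards [haeIcc] with z hz
    exact hunn z hz
  have hpae : p =ᵐ[η] 0 := (integral_eq_zero_iff_of_nonneg_ae hnn (hintη hpcont)).1 hp0
  set Zs : Set ℝ := {z ∈ Set.Icc A B | p z = 0} with hZs
  have haeZ : ∀ᵐ z ∂η, z ∈ Zs := by
    filter_upwards [haeIcc, hpae] with z h1 h2
    exact ⟨h1, h2⟩
  have hZc : η (Zsᶜ) = 0 := by
    rw [ae_iff] at haeZ
    exact haeZ
  have hTbound : ∀ T : Finset ℝ, ↑T ⊆ Zs → T.card ≤ K := by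
    intro T hT
    exact ChebAux.card_le_of_zeros hCheb hu0 T (fun z hz => (hT hz).1)
      (fun z hz => (hT (Finset.mem_coe.2 hz)).2)
  have hZfin : Zs.Finite := by
    by_contra hinf
    obtain ⟨T, hTsub, hTcard⟩ := Set.Infinite.exists_subset_card_eq hinf (K + 1)
    exact absurd (hTbound T hTsub) (by omega)
  set Z' := hZfin.toFinset with hZ'
  have hZ'coe : (↑Z' : Set ℝ) = Zs := Set.Finite.coe_toFinset _
  have hsZ' : s ⊆ Z' := by
    intro x hx
    rw [hZ', Set.Finite.mem_toFinset]
    exact ⟨hsIcc hx, huz x hx⟩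
  have hZ'Icc : ↑Z' ⊆ Set.Icc A B := by
    rw [hZ'coe]; exact fun z hz => hz.1
  have hZ'card : Z'.card ≤ K := hTbound Z' (hZ'coe ▸ subset_rfl)
  have hηrepr : η = ∑ x ∈ Z', η {x} • Measure.dirac x :=
    ChebAux.measure_eq_sum_dirac (by rw [hZ'coe]; exact hZc)
  have hξzero : ∀ x, x ∉ s → ξ {x} = 0 := by
    intro x hxs
    rw [hrepr, Measure.finset_sum_apply]
    apply Finset.sum_eq_zero
    intro t ht
    have htx : t ∉ ({x} : Set ℝ) := fun h => hxs ((Set.mem_singleton_iff.1 h) ▸ ht)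
    rw [Measure.smul_apply, Measure.dirac_apply' _ (measurableSet_singleton x), smul_eq_mul,
      Set.indicator_of_notMem htx, mul_zero]
  have hηzero : ∀ x, x ∉ Z' → η {x} = 0 := by
    intro x hx
    apply measure_mono_null _ hZc
    intro z hz
    rw [Set.mem_singleton_iff] at hz
    subst hz
    intro hmem
    exact hx (by rw [hZ', Set.Finite.mem_toFinset]; exact hmem)
  have hdiffinf : (Set.Icc A B \ ↑Z').Infinite :=
    (Set.Icc_infinite hAB).diff Z'.finite_toSet
  obtain ⟨T2, hT2sub, hT2card⟩ := hdiffinf.exists_subset_card_eq (K + 1 - Z'.card)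
  set W := Z' ∪ T2 with hW
  have hWdisj : Disjoint Z' T2 := by
    rw [Finset.disjoint_right]
    intro z hz hz'
    exact (hT2sub hz).2 (Finset.mem_coe.2 hz')
  have hWcard : W.card = K + 1 := by
    rw [hW, Finset.card_union_of_disjoint hWdisj, hT2card]
    omega
  have hWIcc : ↑W ⊆ Set.Icc A B := by
    intro z hz
    have hz' : z ∈ Z' ∪ T2 := Finset.mem_coe.1 hz
    rcases Finset.mem_union.1 hz' with h | h
    · exact hZ'Icc (Finset.mem_coe.2 h)
    · exact (hT2sub (Finset.mem_coe.2 h)).1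
  set wv : Fin (K + 1) → ℝ := fun j => W.orderEmbOfFin hWcard j with hwv
  have hwvmem : ∀ j, wv j ∈ W := fun j => Finset.orderEmbOfFin_mem _ _ _
  set M : Matrix (Fin (K + 1)) (Fin (K + 1)) ℝ := Matrix.of (fun i j => Ψ i (wv j)) with hM
  have hdet : 0 < M.det :=
    hCheb wv (W.orderEmbOfFin hWcard).strictMono (fun j => hWIcc (hwvmem j))
  have hWsum : ∀ F : ℝ → ℝ, ∑ x ∈ W, F x = ∑ j, F (wv j) := by
    intro F
    have himg : Finset.univ.image wv = W := by
      apply Finset.coe_injective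
      rw [Finset.coe_image, Finset.coe_univ, Set.image_univ]
      exact Finset.range_orderEmbOfFin _ _
    rw [← himg, Finset.sum_image (fun a _ b _ h => (W.orderEmbOfFin hWcard).injective h)]
  have hmomW : ∀ i, ∑ j, Ψ i (wv j) * ((η {wv j}).toReal - (ξ {wv j}).toReal) = 0 := by
    intro i
    have hηi : ∫ x, Ψ i x ∂η = ∑ x ∈ W, (η {x}).toReal * Ψ i x := by
      conv_lhs => rw [hηrepr]
      rw [ChebAux.integral_sum_dirac (fun x => η {x}) (fun x _ => measure_ne_top η _) (Ψ i)]
      apply Finset.sum_subset Finset.subset_union_left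
      intro x hxW hxZ
      rw [hηzero x hxZ]
      simp
    have hξi : ∫ x, Ψ i x ∂ξ = ∑ x ∈ W, (ξ {x}).toReal * Ψ i x := by
      conv_lhs => rw [hrepr]
      rw [ChebAux.integral_sum_dirac (fun x => ξ {x}) (fun x _ => measure_ne_top ξ _) (Ψ i)]
      apply Finset.sum_subset (hsZ'.trans Finset.subset_union_left)
      intro x hxW hxs
      rw [hξzero x hxs]
      simp
    have hsub : ∑ x ∈ W, ((η {x}).toReal * Ψ i x - (ξ {x}).toReal * Ψ i x) = 0 := by
      rw [Finset.sum_sub_distrib, ← hηi, ← hξi, hmom i, sub_self]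
    have hcongr : ∑ x ∈ W, Ψ i x * ((η {x}).toReal - (ξ {x}).toReal)
        = ∑ x ∈ W, ((η {x}).toReal * Ψ i x - (ξ {x}).toReal * Ψ i x) :=
      Finset.sum_congr rfl (fun x _ => by ring)
    rw [← hWsum (fun x => Ψ i x * ((η {x}).toReal - (ξ {x}).toReal)), hcongr, hsub]
  set v : Fin (K + 1) → ℝ := fun j => (η {wv j}).toReal - (ξ {wv j}).toReal with hv
  have hMv : M.mulVec v = 0 := by
    funext i
    have h1 : M.mulVec v i = ∑ j, Ψ i (wv j) * v j := by
      simp [hM, Matrix.mulVec, dotProduct]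
    rw [h1]
    show _ = (0 : ℝ)
    exact hmomW i
  have hv0 : v = 0 := by
    have h1 : (M⁻¹ * M).mulVec v = M⁻¹.mulVec (M.mulVec v) := (Matrix.mulVec_mulVec _ _ _).symm
    rw [Matrix.nonsing_inv_mul _ (isUnit_iff_ne_zero.2 hdet.ne'), Matrix.one_mulVec, hMv,
      Matrix.mulVec_zero] at h1
    exact h1
  have hweights : ∀ x ∈ Z', η {x} = ξ {x} := by
    intro x hx
    have hxW : x ∈ W := Finset.mem_union_left _ hx
    have hxrange : x ∈ Set.range (W.orderEmbOfFin hWcard) := by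
      rw [Finset.range_orderEmbOfFin]
      exact hxW
    obtain ⟨j, hj⟩ := hxrange
    have htr : (η {x}).toReal = (ξ {x}).toReal := by
      have h2 := congrFun hv0 j
      simp only [hv, Pi.zero_apply] at h2
      have hjx : wv j = x := hj
      rw [hjx] at h2
      linarith
    exact (ENNReal.toReal_eq_toReal_iff' (measure_ne_top η _) (measure_ne_top ξ _)).1 htr
  rw [hηrepr]
  have hstep : ∑ x ∈ Z', η {x} • Measure.dirac x = ∑ x ∈ Z', ξ {x} • Measure.dirac x :=
    Finset.sum_congr rfl (fun x hx => by rw [hweights x hx])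
  rw [hstep, ← Finset.sum_subset hsZ'
    (fun x hx hxs => by rw [hξzero x hxs, zero_smul])]
  exact hrepr.symm
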